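/- If P is an NN-bisimulation for a neural network N and v is a P-consistent valuation of layer i-1 (i.e., v assigns equal values to all nodes in the same equivalence class), then the valuation v' obtained by applying the semantics of layer i to v is also P-consistent. -/
import Mathlib


/-- One-step (layer) semantics of a neural network layer. -/
def layerSem {α β : Type*} [Fintype α] (W : α → β → ℝ) (b : β → ℝ) (A : β → ℝ → ℝ)
    (v : α → ℝ) : β → ℝ :=
  fun s' => A s' ((∑ s, W s s' * v s) + b s')

open Classical in
/-- Pre-sum of a set of previous-layer nodes into a node `s'`. -/
noncomputable def preSum {α β : Type*} [Fintype α] (W : α → β → ℝ) (c : Set α) (s' : β) : ℝ :=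
  ∑ s ∈ Finset.univ.filter (fun s => s ∈ c), W s s'

/-- A valuation is `P`-consistent if it is constant on classes. -/
def consistent {α : Type*} (P : Setoid α) (v : α → ℝ) : Prop :=
  ∀ s₁ s₂, P.r s₁ s₂ → v s₁ = v s₂

/-- One layer of the NN-bisimulation condition. -/
def isBisimStep {α β : Type*} [Fintype α] (W : α → β → ℝ) (b : β → ℝ) (A : β → ℝ → ℝ)
    (Pp : Setoid α) (Pn : Setoid β) : Prop :=
  ∀ s₁ s₂ : β, Pn.r s₁ s₂ →
    A s₁ = A s₂ ∧ b s₁ = b s₂ ∧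
    ∀ t : α, preSum W {x | Pp.r x t} s₁ = preSum W {x | Pp.r x t} s₂

/-- One layer of the δ-NN-bisimulation condition. -/
def isDeltaBisimStep {α β : Type*} [Fintype α] (W : α → β → ℝ) (b : β → ℝ) (A : β → ℝ → ℝ)
    (Pp : Setoid α) (Pn : Setoid β) (δ : ℝ) : Prop :=
  ∀ s₁ s₂ : β, Pn.r s₁ s₂ →
    A s₁ = A s₂ ∧ |b s₁ - b s₂| ≤ δ ∧
    ∀ t : α, |preSum W {x | Pp.r x t} s₁ - preSum W {x | Pp.r x t} s₂| ≤ δ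

/-- Semantics of the composition of the first `i` layers of a network. -/
def netSem (S : ℕ → Type) [∀ i, Fintype (S i)] (W : ∀ i, S i → S (i+1) → ℝ)
    (b : ∀ i, S (i+1) → ℝ) (A : ∀ i, S (i+1) → ℝ → ℝ) : (i : ℕ) → (S 0 → ℝ) → S i → ℝ
  | 0, v => v
  | (i+1), v => layerSem (W i) (b i) (A i) (netSem S W b A i v)

/-- Quotient weights: pre-sum of a class into a representative. -/
noncomputable def qW {α β : Type*} [Fintype α] (Pp : Setoid α) (Pn : Setoid β)
    (W : α → β → ℝ) (c : Quotient Pp) (d : Quotient Pn) : ℝ :=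
  preSum W {x | Quotient.mk Pp x = c} d.out

/-- Quotient bias via representative. -/
noncomputable def qb {β : Type*} (Pn : Setoid β) (b : β → ℝ) (d : Quotient Pn) : ℝ := b d.out

/-- Quotient activation via representative. -/
noncomputable def qA {β : Type*} (Pn : Setoid β) (A : β → ℝ → ℝ) (d : Quotient Pn) : ℝ → ℝ :=
  A d.out

/-- Abstraction of a `P`-consistent valuation. -/
noncomputable def absVal {α : Type*} (P : Setoid α) (v : α → ℝ) (c : Quotient P) : ℝ := v c.out

/-- `vh` is an ε-abstraction of `v`. -/
def isEpsAbs {α : Type*} (P : Setoid α) (ε : ℝ) (v : α → ℝ) (vh : Quotient P → ℝ) : Prop :=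
  ∀ s : α, |vh (Quotient.mk P s) - v s| ≤ ε

/-- `v` is (ε,P)-consistent. -/
def epsConsistent {α : Type*} (P : Setoid α) (ε : ℝ) (v : α → ℝ) : Prop :=
  ∀ s₁ s₂, P.r s₁ s₂ → |v s₁ - v s₂| ≤ ε


/-- one-step preservation of `P`-consistency under a bisimulation. -/
theorem bisim_step_preserves_consistent {α β : Type*} [Fintype α]
    (W : α → β → ℝ) (b : β → ℝ) (A : β → ℝ → ℝ)
    (Pp : Setoid α) (Pn : Setoid β)
    (hbis : isBisimStep W b A Pp Pn)
    (v : α → ℝ) (hv : consistent Pp v) :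
    consistent Pn (layerSem W b A v) := by
  intro s₁ s₂ h
  obtain ⟨hA, hb, hps⟩ := hbis s₁ s₂ h
  unfold layerSem
  rw [hA, hb]
  congr 2
  classical
  have key : ∀ s' : β, ∑ s, W s s' * v s =
      ∑ c : Quotient Pp, (preSum W {x | Quotient.mk Pp x = c} s') * v c.out := by
    intro s'
    rw [← Finset.sum_fiberwise Finset.univ (fun s => Quotient.mk Pp s) (fun s => W s s' * v s)]
    refine Finset.sum_congr rfl fun c _ => ?_
    rw [preSum, Finset.sum_mul]
    refine Finset.sum_congr (by ext x; simp [Set.mem_setOf_eq]) fun x hx => ?_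
    simp only [Finset.mem_filter, Set.mem_setOf_eq] at hx
    rw [hv x c.out (Quotient.exact (hx.2.trans c.out_eq.symm))]
  rw [key s₁, key s₂]
  refine Finset.sum_congr rfl fun c _ => ?_
  have hset : {x | Quotient.mk Pp x = c} = {x | Pp.r x c.out} := by
    ext x
    simp only [Set.mem_setOf_eq]
    constructor
    · intro hx; exact Quotient.exact (hx.trans c.out_eq.symm)
    · intro hx; exact (Quotient.sound hx).trans c.out_eq
  rw [hset, hps c.out]
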